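/- arXiv:1109.3406 — 4 statements merged into one kernel-verified Lean document; each statement's English description precedes it below -/
import Mathlib

section
/- Let Δ be a real random variable and let r > 0, ρ > 0, σ > 0 and y₀ ∈ ℝ. Assume that for every integer m ≥ 1, E[Δ^{2m}] ≤ (3r)^{2m} ( 4 (2m+1)!! ρ^{2m} + y₀^{2m} + (2m−1)!! σ^{2m} ). Set κ₀ = 1 / ( 108 r² (3ρ² + y₀² + 2σ²) ). Then E[ exp( κ₀ Δ² ) ] ≤ 2. -/
open MeasureTheory Real

lemma df_le_three (m : ℕ) : Nat.doubleFactorial (2*m+1) ≤ 3^m * m.factorial := by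
  induction m with
  | zero => simp [Nat.doubleFactorial]
  | succ k ih =>
    have h : 2*(k+1)+1 = (2*k+1)+2 := by ring
    rw [h, Nat.doubleFactorial_add_two]
    calc (2*k+1+2) * Nat.doubleFactorial (2*k+1) ≤ (3*(k+1)) * (3^k * k.factorial) := by
          exact Nat.mul_le_mul (by omega) ih
      _ = 3^(k+1) * (k+1).factorial := by
          rw [Nat.factorial_succ, pow_succ]; ring

lemma df_le_two (m : ℕ) (hm : 1 ≤ m) : Nat.doubleFactorial (2*m-1) ≤ 2^m * m.factorial := by
  obtain ⟨k, rfl⟩ := Nat.exists_eq_add_of_le hm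
  have h : 2*(1+k)-1 = 2*k+1 := by omega
  rw [h]
  induction k with
  | zero => simp [Nat.doubleFactorial]
  | succ j ih =>
    have h2 : 2*(j+1)+1 = (2*j+1)+2 := by ring
    rw [h2, Nat.doubleFactorial_add_two]
    calc (2*j+1+2) * Nat.doubleFactorial (2*j+1) ≤ (2*(j+2)) * (2^(1+j) * (1+j).factorial) := by
          exact Nat.mul_le_mul (by omega) (ih (by omega) (by omega))
      _ ≤ 2^(1+(j+1)) * (1+(j+1)).factorial := by
          have e1 : 1+(j+1) = (1+j)+1 := by omega
          rw [e1, Nat.factorial_succ, pow_succ]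
          ring_nf
          omega

lemma term_bound (r ρ σ y₀ : ℝ) (hr : 0 < r) (hρ : 0 < ρ) (hσ : 0 < σ) (m : ℕ) (hm : 1 ≤ m) :
    (1 / (108 * r ^ 2 * (3 * ρ ^ 2 + y₀ ^ 2 + 2 * σ ^ 2))) ^ m / (m.factorial : ℝ) *
      ((3 * r) ^ (2 * m) *
        (4 * (Nat.doubleFactorial (2 * m + 1) : ℝ) * ρ ^ (2 * m) + y₀ ^ (2 * m) +
          (Nat.doubleFactorial (2 * m - 1) : ℝ) * σ ^ (2 * m))) ≤ 6 * (1 / 12) ^ m := by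
  set S : ℝ := 3 * ρ ^ 2 + y₀ ^ 2 + 2 * σ ^ 2 with hS_def
  have hS : 0 < S := by positivity
  have hF : (1 : ℝ) ≤ (m.factorial : ℝ) := by exact_mod_cast m.factorial_pos
  have hF0 : (0 : ℝ) < (m.factorial : ℝ) := by positivity
  have hD1 : (Nat.doubleFactorial (2 * m + 1) : ℝ) ≤ 3 ^ m * (m.factorial : ℝ) := by
    exact_mod_cast df_le_three m
  have hD2 : (Nat.doubleFactorial (2 * m - 1) : ℝ) ≤ 2 ^ m * (m.factorial : ℝ) := by
    exact_mod_cast df_le_two m hm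
  have e0 : (1 / (108 * r ^ 2 * S)) * (9 * r ^ 2) = 1 / (12 * S) := by
    field_simp
    ring
  have hXP : 4 * (Nat.doubleFactorial (2 * m + 1) : ℝ) * ρ ^ (2 * m) + y₀ ^ (2 * m) +
      (Nat.doubleFactorial (2 * m - 1) : ℝ) * σ ^ (2 * m) ≤
      (m.factorial : ℝ) * (4 * (3 * ρ ^ 2) ^ m + (y₀ ^ 2) ^ m + (2 * σ ^ 2) ^ m) := by
    simp only [pow_mul]
    have h1 : (3 * ρ ^ 2) ^ m = 3 ^ m * (ρ ^ 2) ^ m := mul_pow 3 (ρ ^ 2) m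
    have h2 : (2 * σ ^ 2) ^ m = 2 ^ m * (σ ^ 2) ^ m := mul_pow 2 (σ ^ 2) m
    rw [h1, h2]
    have p1 : (0:ℝ) ≤ (ρ ^ 2) ^ m := by positivity
    have p2 : (0:ℝ) ≤ (y₀ ^ 2) ^ m := by positivity
    have p3 : (0:ℝ) ≤ (σ ^ 2) ^ m := by positivity
    nlinarith [mul_le_mul_of_nonneg_right hD1 p1, mul_le_mul_of_nonneg_right hD2 p3,
      mul_le_mul_of_nonneg_right hF p2]
  have hPS : 4 * (3 * ρ ^ 2) ^ m + (y₀ ^ 2) ^ m + (2 * σ ^ 2) ^ m ≤ 6 * S ^ m := by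
    have b1 : (3 * ρ ^ 2) ^ m ≤ S ^ m := pow_le_pow_left₀ (by positivity) (by nlinarith) m
    have b2 : (y₀ ^ 2) ^ m ≤ S ^ m := pow_le_pow_left₀ (by positivity) (by nlinarith) m
    have b3 : (2 * σ ^ 2) ^ m ≤ S ^ m := pow_le_pow_left₀ (by positivity) (by nlinarith) m
    linarith
  have key : (1 / (108 * r ^ 2 * S)) ^ m / (m.factorial : ℝ) *
      ((3 * r) ^ (2 * m) *
        (4 * (Nat.doubleFactorial (2 * m + 1) : ℝ) * ρ ^ (2 * m) + y₀ ^ (2 * m) +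
          (Nat.doubleFactorial (2 * m - 1) : ℝ) * σ ^ (2 * m))) ≤
      (1 / (12 * S)) ^ m * (6 * S ^ m) := by
    have e1 : (3 * r : ℝ) ^ (2 * m) = (9 * r ^ 2) ^ m := by
      rw [pow_mul]; norm_num; ring_nf
    rw [e1]
    have hκ : (0:ℝ) < 1 / (108 * r ^ 2 * S) := by positivity
    calc (1 / (108 * r ^ 2 * S)) ^ m / (m.factorial : ℝ) * ((9 * r ^ 2) ^ m * _)
        ≤ (1 / (108 * r ^ 2 * S)) ^ m / (m.factorial : ℝ) * ((9 * r ^ 2) ^ m *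
            ((m.factorial : ℝ) * (4 * (3 * ρ ^ 2) ^ m + (y₀ ^ 2) ^ m + (2 * σ ^ 2) ^ m))) := by
          apply mul_le_mul_of_nonneg_left _ (by positivity)
          exact mul_le_mul_of_nonneg_left hXP (by positivity)
      _ = ((1 / (108 * r ^ 2 * S)) * (9 * r ^ 2)) ^ m *
            (4 * (3 * ρ ^ 2) ^ m + (y₀ ^ 2) ^ m + (2 * σ ^ 2) ^ m) := by
          rw [div_mul_eq_mul_div (_ ^ m), div_eq_iff hF0.ne']; ring
      _ = (1 / (12 * S)) ^ m * (4 * (3 * ρ ^ 2) ^ m + (y₀ ^ 2) ^ m + (2 * σ ^ 2) ^ m) := by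
          rw [e0]
      _ ≤ (1 / (12 * S)) ^ m * (6 * S ^ m) := by
          exact mul_le_mul_of_nonneg_left hPS (by positivity)
  refine key.trans (le_of_eq ?_)
  have : (1 / (12 * S)) ^ m * S ^ m = (1 / 12 : ℝ) ^ m := by
    rw [← mul_pow]
    congr 1
    field_simp
  calc (1 / (12 * S)) ^ m * (6 * S ^ m) = 6 * ((1 / (12 * S)) ^ m * S ^ m) := by ring
    _ = 6 * (1 / 12) ^ m := by rw [this]


/-- From the moment bounds
`E Δ^{2m} ≤ (3r)^{2m} (4 (2m+1)!! ρ^{2m} + y₀^{2m} + (2m−1)!! σ^{2m})`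
one gets the exponential moment bound `E exp(κ₀ Δ²) ≤ 2` with
`κ₀ = 1/(108 r² (3ρ² + y₀² + 2σ²))`. -/
theorem exponential_moment_bound
    {Ω : Type*} [MeasurableSpace Ω] (μ : Measure Ω) [IsProbabilityMeasure μ]
    (Δ : Ω → ℝ) (hΔ : Measurable Δ)
    (r ρ σ y₀ : ℝ) (hr : 0 < r) (hρ : 0 < ρ) (hσ : 0 < σ)
    (hmom : ∀ m : ℕ, 1 ≤ m →
      ∫⁻ ω, ENNReal.ofReal (Δ ω ^ (2 * m)) ∂μ ≤
        ENNReal.ofReal ((3 * r) ^ (2 * m) *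
          (4 * (Nat.doubleFactorial (2 * m + 1) : ℝ) * ρ ^ (2 * m) + y₀ ^ (2 * m) +
            (Nat.doubleFactorial (2 * m - 1) : ℝ) * σ ^ (2 * m)))) :
    ∫⁻ ω, ENNReal.ofReal
        (Real.exp (1 / (108 * r ^ 2 * (3 * ρ ^ 2 + y₀ ^ 2 + 2 * σ ^ 2)) * Δ ω ^ 2)) ∂μ
      ≤ 2 := by
  set κ : ℝ := 1 / (108 * r ^ 2 * (3 * ρ ^ 2 + y₀ ^ 2 + 2 * σ ^ 2)) with hκ_def
  have hκ : 0 < κ := by positivity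
  -- pointwise series expansion
  have hexp : ∀ ω, ENNReal.ofReal (Real.exp (κ * Δ ω ^ 2)) =
      ∑' m : ℕ, ENNReal.ofReal (κ ^ m / (m.factorial : ℝ) * Δ ω ^ (2 * m)) := by
    intro ω
    have h1 : Real.exp (κ * Δ ω ^ 2) = ∑' m : ℕ, (κ * Δ ω ^ 2) ^ m / (m.factorial : ℝ) := by
      rw [Real.exp_eq_exp_ℝ, NormedSpace.exp_eq_tsum_div]
    have h2 : ∀ m : ℕ, (κ * Δ ω ^ 2) ^ m / (m.factorial : ℝ) =
        κ ^ m / (m.factorial : ℝ) * Δ ω ^ (2 * m) := by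
      intro m
      rw [mul_pow, pow_mul]
      ring
    rw [h1, ENNReal.ofReal_tsum_of_nonneg]
    · exact tsum_congr fun m => by rw [h2 m]
    · intro m; positivity
    · exact Real.summable_pow_div_factorial _
  simp only [hexp]
  rw [lintegral_tsum (fun m => (((hΔ.pow_const (2*m)).const_mul _).ennreal_ofReal).aemeasurable)]
  -- each term's integral
  have hterm : ∀ m : ℕ,
      ∫⁻ ω, ENNReal.ofReal (κ ^ m / (m.factorial : ℝ) * Δ ω ^ (2 * m)) ∂μ =
      ENNReal.ofReal (κ ^ m / (m.factorial : ℝ)) * ∫⁻ ω, ENNReal.ofReal (Δ ω ^ (2 * m)) ∂μ := by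
    intro m
    simp_rw [ENNReal.ofReal_mul (by positivity : (0:ℝ) ≤ κ ^ m / (m.factorial : ℝ))]
    rw [lintegral_const_mul _ ((hΔ.pow_const (2*m)).ennreal_ofReal)]
  rw [tsum_eq_zero_add' ENNReal.summable]
  have h0 : ∫⁻ ω, ENNReal.ofReal (κ ^ 0 / ((Nat.factorial 0 : ℕ) : ℝ) * Δ ω ^ (2 * 0)) ∂μ = 1 := by
    simp [lintegral_one]
  have htail : ∀ k : ℕ,
      ∫⁻ ω, ENNReal.ofReal (κ ^ (k+1) / (((k+1).factorial : ℕ) : ℝ) * Δ ω ^ (2 * (k+1))) ∂μ ≤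
      ENNReal.ofReal (6 * (1/12 : ℝ) ^ (k+1)) := by
    intro k
    rw [hterm (k+1)]
    calc ENNReal.ofReal (κ ^ (k+1) / ((k+1).factorial : ℝ)) *
          ∫⁻ ω, ENNReal.ofReal (Δ ω ^ (2 * (k+1))) ∂μ
        ≤ ENNReal.ofReal (κ ^ (k+1) / ((k+1).factorial : ℝ)) *
          ENNReal.ofReal ((3 * r) ^ (2 * (k+1)) *
            (4 * (Nat.doubleFactorial (2 * (k+1) + 1) : ℝ) * ρ ^ (2 * (k+1)) + y₀ ^ (2 * (k+1)) +
              (Nat.doubleFactorial (2 * (k+1) - 1) : ℝ) * σ ^ (2 * (k+1)))) :=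
          mul_le_mul_right (hmom (k+1) (Nat.le_add_left 1 k)) _
      _ = ENNReal.ofReal (κ ^ (k+1) / ((k+1).factorial : ℝ) *
            ((3 * r) ^ (2 * (k+1)) *
            (4 * (Nat.doubleFactorial (2 * (k+1) + 1) : ℝ) * ρ ^ (2 * (k+1)) + y₀ ^ (2 * (k+1)) +
              (Nat.doubleFactorial (2 * (k+1) - 1) : ℝ) * σ ^ (2 * (k+1))))) :=
          (ENNReal.ofReal_mul (by positivity)).symm
      _ ≤ ENNReal.ofReal (6 * (1/12 : ℝ) ^ (k+1)) := by
          apply ENNReal.ofReal_le_ofReal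
          exact term_bound r ρ σ y₀ hr hρ hσ (k+1) (Nat.le_add_left 1 k)
  calc (∫⁻ ω, ENNReal.ofReal (κ ^ 0 / ((Nat.factorial 0 : ℕ) : ℝ) * Δ ω ^ (2 * 0)) ∂μ) +
        ∑' k : ℕ, ∫⁻ ω, ENNReal.ofReal (κ ^ (k+1) / (((k+1).factorial : ℕ) : ℝ) * Δ ω ^ (2 * (k+1))) ∂μ
      ≤ 1 + ∑' k : ℕ, ENNReal.ofReal (6 * (1/12 : ℝ) ^ (k+1)) := by
        rw [h0]
        exact add_le_add_right (ENNReal.tsum_le_tsum htail) 1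
    _ ≤ 1 + 1 := by
        apply add_le_add_right
        rw [← ENNReal.ofReal_tsum_of_nonneg (fun k => by positivity)]
        · apply ENNReal.ofReal_le_one.mpr
          have hg : ∑' k : ℕ, 6 * (1/12 : ℝ) ^ (k+1) = 6/11 := by
            have : ∀ k : ℕ, 6 * (1/12 : ℝ) ^ (k+1) = (1/2) * (1/12) ^ k := by
              intro k; rw [pow_succ]; ring
            simp_rw [this]
            rw [tsum_mul_left, tsum_geometric_of_lt_one (by norm_num) (by norm_num)]
            norm_num
          rw [hg]; norm_num
        · apply Summable.mul_left
          exact ((summable_geometric_of_lt_one (by norm_num) (by norm_num)).comp_injective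
            (add_left_injective 1))
    _ = 2 := one_add_one_eq_two
end

section
/- Let S ∈ Σ_{L,M} and set K = 2 (x* + M L). Then for every x ∈ ℝ with |x| > K, S(x)/x ≤ −1/(2L). -/
/-- Drift condition far from the origin: for `S ∈ Σ_{L,M}` and
`K = 2(x* + ML)`, one has `S(x)/x ≤ −1/(2L)` whenever `|x| > K`. -/
theorem drift_ratio_bound
    (xstar M L : ℝ) (hxstar : 1 ≤ xstar) (hM : 0 < M) (hL : 1 < L)
    (S : ℝ → ℝ) (hS : ContDiff ℝ 1 S)
    (hSM : ∀ x : ℝ, |x| ≤ xstar → |S x| + |deriv S x| ≤ M)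
    (hSL : ∀ x : ℝ, xstar ≤ |x| → -L ≤ deriv S x ∧ deriv S x ≤ -L⁻¹) :
    ∀ x : ℝ, 2 * (xstar + M * L) < |x| → S x / x ≤ -(1 / (2 * L)) := by
  intro x hx
  have hL0 : (0:ℝ) < L := lt_trans one_pos hL
  have hLinv : (0:ℝ) < L⁻¹ := inv_pos.mpr hL0
  have hLL : L⁻¹ * L = 1 := inv_mul_cancel₀ hL0.ne'
  have hx0 : (0:ℝ) < xstar := lt_of_lt_of_le one_pos hxstar
  have hdS : Differentiable ℝ S := hS.differentiable one_ne_zero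
  set g : ℝ → ℝ := fun t => S t + t * L⁻¹ with hgdef
  have hdg : Differentiable ℝ g := hdS.add (differentiable_id.mul_const _)
  have hderivg : ∀ t, deriv g t = deriv S t + L⁻¹ := by
    intro t
    have h1 : HasDerivAt S (deriv S t) t := (hdS t).hasDerivAt
    have h2 : HasDerivAt (fun u : ℝ => u * L⁻¹) L⁻¹ t := by
      simpa using (hasDerivAt_id t).mul_const L⁻¹
    exact (h1.add h2).deriv
  -- bounds at ± xstar
  have hSx1 : |S xstar| ≤ M := by
    have := hSM xstar (by rw [abs_of_pos hx0])
    have := abs_nonneg (deriv S xstar); linarith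
  have hSx2 : |S (-xstar)| ≤ M := by
    have := hSM (-xstar) (by rw [abs_neg, abs_of_pos hx0])
    have := abs_nonneg (deriv S (-xstar)); linarith
  rcases lt_or_ge 0 x with hxpos | hxle
  · -- positive side
    rw [abs_of_pos hxpos] at hx
    have hanti : AntitoneOn g (Set.Ici xstar) := by
      apply antitoneOn_of_deriv_nonpos (convex_Ici _) hdg.continuous.continuousOn
        hdg.differentiableOn
      intro t ht
      rw [interior_Ici, Set.mem_Ioi] at ht
      have habs : xstar ≤ |t| := by
        rw [abs_of_pos (lt_trans hx0 ht)]; exact ht.le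
      have := (hSL t habs).2
      rw [hderivg]; linarith
    have hxge : xstar ≤ x := by nlinarith
    have hkey : g x ≤ g xstar := hanti Set.self_mem_Ici hxge hxge
    simp only [hgdef] at hkey
    have hS1 : S xstar ≤ M := (abs_le.mp hSx1).2
    rw [div_le_iff₀ hxpos, show -(1/(2*L)) = -(L⁻¹/2) by rw [one_div, mul_inv]; ring]
    have hmul := mul_lt_mul_of_pos_left hx hLinv
    have hML : L⁻¹ * (M * L) = M := by field_simp
    linarith
  · -- negative side
    have hxneg : x < 0 := by
      rcases lt_or_eq_of_le hxle with h | h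
      · exact h
      · exfalso; subst h; simp at hx; nlinarith
    rw [abs_of_neg hxneg] at hx
    have hanti : AntitoneOn g (Set.Iic (-xstar)) := by
      apply antitoneOn_of_deriv_nonpos (convex_Iic _) hdg.continuous.continuousOn
        hdg.differentiableOn
      intro t ht
      rw [interior_Iic, Set.mem_Iio] at ht
      have habs : xstar ≤ |t| := by
        rw [abs_of_neg (lt_trans ht (by linarith))]; linarith
      have := (hSL t habs).2
      rw [hderivg]; linarith
    have hxle' : x ≤ -xstar := by nlinarith
    have hkey : g (-xstar) ≤ g x := hanti hxle' Set.self_mem_Iic hxle'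
    simp only [hgdef] at hkey
    have hS2 : -M ≤ S (-xstar) := (abs_le.mp hSx2).1
    rw [div_le_iff_of_neg hxneg, show -(1/(2*L)) = -(L⁻¹/2) by rw [one_div, mul_inv]; ring]
    have hmul := mul_lt_mul_of_pos_left hx hLinv
    have hML : L⁻¹ * (M * L) = M := by field_simp
    linarith
end

section
/- Let S ∈ Σ_{L,M}. Then for every integer m ≥ 1 and every x ∈ ℝ, x^{2m−1} S(x) ≤ A_m − x^{2m} / (2L), where A_m = ( 2 (x* + M L) )^{2m−1} · ( 2M + x* (L + L^{−1}) + 2 L² M ). -/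
set_option maxHeartbeats 2000000 in
/-- Lyapunov-type bound: for `S ∈ Σ_{L,M}`, every integer `m ≥ 1` and every `x`,
`x^{2m−1} S(x) ≤ A_m − x^{2m}/(2L)` with
`A_m = (2(x* + ML))^{2m−1} (2M + x*(L + L⁻¹) + 2L²M)`. -/
theorem drift_lyapunov_bound
    (xstar M L : ℝ) (hxstar : 1 ≤ xstar) (hM : 0 < M) (hL : 1 < L)
    (S : ℝ → ℝ) (hS : ContDiff ℝ 1 S)
    (hSM : ∀ x : ℝ, |x| ≤ xstar → |S x| + |deriv S x| ≤ M)
    (hSL : ∀ x : ℝ, xstar ≤ |x| → -L ≤ deriv S x ∧ deriv S x ≤ -L⁻¹) :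
    ∀ m : ℕ, 1 ≤ m → ∀ x : ℝ,
      x ^ (2 * m - 1) * S x ≤
        (2 * (xstar + M * L)) ^ (2 * m - 1) *
            (2 * M + xstar * (L + L⁻¹) + 2 * L ^ 2 * M)
          - x ^ (2 * m) / (2 * L) := by
  intro m hm x
  have hL0 : 0 < L := by linarith
  have hε : 0 < L⁻¹ := inv_pos.mpr hL0
  have hLε : L * L⁻¹ = 1 := mul_inv_cancel₀ (ne_of_gt hL0)
  set ε := L⁻¹ with hεdef
  set C := 2 * (xstar + M * L) with hCdef
  set D := 2 * M + xstar * (L + ε) + 2 * L ^ 2 * M with hDdef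
  set n := 2 * m - 1 with hn
  have h2m : 2 * m = n + 1 := by omega
  rw [h2m]
  have hodd : Odd n := ⟨m - 1, by omega⟩
  have heven : Even (n + 1) := by rw [← h2m]; exact even_two_mul m
  have hC0 : 0 < C := by nlinarith
  have hxC : xstar ≤ C := by nlinarith
  have hCn : (0:ℝ) ≤ C ^ n := pow_nonneg hC0.le n
  have hMε : (0:ℝ) ≤ M + xstar * ε := by nlinarith
  have hDge : M + xstar * ε ≤ D := by nlinarith
  have hdiv : x ^ (n+1) / (2 * L) = x ^ (n+1) * ε / 2 := by
    rw [div_eq_mul_inv, mul_inv, hεdef]; ring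
  rw [hdiv]
  clear_value ε C D n
  -- derivative facts
  have hdiff : Differentiable ℝ S := hS.differentiable one_ne_zero
  have hf : ∀ t : ℝ, HasDerivAt (fun t => S t + ε * t) (deriv S t + ε) t := by
    intro t
    have h := ((hdiff t).hasDerivAt).add ((hasDerivAt_id t).const_mul ε)
    rw [mul_one] at h; exact h
  have hfd : Differentiable ℝ (fun t => S t + ε * t) := fun t => (hf t).differentiableAt
  have hfc : Continuous (fun t => S t + ε * t) :=
    hdiff.continuous.add (continuous_const.mul continuous_id)
  have hmono1 : AntitoneOn (fun t => S t + ε * t) (Set.Ici xstar) := by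
    apply antitoneOn_of_deriv_nonpos (convex_Ici xstar) hfc.continuousOn
      hfd.differentiableOn
    intro t ht
    rw [interior_Ici] at ht
    have ht' : xstar ≤ |t| := by
      rw [abs_of_pos (by simp at ht; linarith)]; simp at ht; linarith
    have := (hSL t ht').2
    rw [(hf t).deriv]
    linarith
  have hmono2 : AntitoneOn (fun t => S t + ε * t) (Set.Iic (-xstar)) := by
    apply antitoneOn_of_deriv_nonpos (convex_Iic (-xstar)) hfc.continuousOn
      hfd.differentiableOn
    intro t ht
    rw [interior_Iic] at ht
    have ht' : xstar ≤ |t| := by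
      rw [abs_of_neg (by simp at ht; linarith)]; simp at ht; linarith
    have := (hSL t ht').2
    rw [(hf t).deriv]
    linarith
  have hSs1 : S xstar ≤ M := by
    have h := hSM xstar (by rw [abs_of_nonneg (by linarith)])
    have := abs_nonneg (deriv S xstar)
    have := le_abs_self (S xstar)
    linarith
  have hSs2 : -M ≤ S (-xstar) := by
    have h := hSM (-xstar) (by rw [abs_neg, abs_of_nonneg (by linarith)])
    have := abs_nonneg (deriv S (-xstar))
    have := neg_abs_le (S (-xstar))
    linarith
  -- key bound
  have key : ∀ y : ℝ, xstar ≤ y → y ^ n * (M + xstar * ε) - y ^ (n+1) * ε / 2 ≤ C ^ n * D := by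
    intro y hy
    have hy0 : (0:ℝ) ≤ y := by linarith
    have hyn : (0:ℝ) ≤ y ^ n := pow_nonneg hy0 n
    have hMLε : M * (L * ε) = M := by rw [hLε]; ring
    rcases le_total y C with h | h
    · have h1 : y ^ n ≤ C ^ n := pow_le_pow_left₀ hy0 h n
      have h2 : (0:ℝ) ≤ y ^ (n+1) := pow_nonneg hy0 _
      nlinarith [mul_le_mul h1 hDge hMε hCn, mul_nonneg h2 hε.le]
    · have h3 : M + xstar * ε - y * ε / 2 ≤ 0 := by
        have := mul_le_mul_of_nonneg_right h hε.le
        nlinarith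
      have h4 : y ^ (n+1) = y ^ n * y := pow_succ y n
      nlinarith [mul_nonneg hCn (hMε.trans hDge), mul_nonpos_of_nonneg_of_nonpos hyn h3]
  rcases le_or_gt xstar x with h1 | h1
  · -- x ≥ xstar
    have hfx : S x + ε * x ≤ S xstar + ε * xstar := by
      simpa using hmono1 Set.self_mem_Ici (Set.mem_Ici.mpr h1) h1
    have hSb : S x ≤ M + xstar * ε - ε * x := by
      have h := mul_comm ε xstar
      linarith
    have hx0 : (0:ℝ) ≤ x := by linarith
    have hxn : (0:ℝ) ≤ x ^ n := pow_nonneg hx0 n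
    have hh1 : x ^ n * S x ≤ x ^ n * (M + xstar * ε - ε * x) :=
      mul_le_mul_of_nonneg_left hSb hxn
    have hh2 := key x h1
    have hh4 : x ^ (n+1) = x ^ n * x := pow_succ x n
    rw [hh4] at hh2 ⊢
    have e1 : x ^ n * (M + xstar * ε - ε * x) = x ^ n * (M + xstar * ε) - x ^ n * x * ε := by
      ring
    have pos : (0:ℝ) ≤ x ^ n * x * ε := mul_nonneg (mul_nonneg hxn hx0) hε.le
    linarith
  rcases le_or_gt x (-xstar) with h2 | h2
  · -- x ≤ -xstar
    have hfx : S (-xstar) + ε * (-xstar) ≤ S x + ε * x := by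
      simpa using hmono2 (Set.mem_Iic.mpr h2) Set.self_mem_Iic h2
    have hSb : -M - xstar * ε - ε * x ≤ S x := by
      have h := mul_comm ε xstar
      linarith
    have hy : xstar ≤ -x := by linarith
    have hy0 : (0:ℝ) ≤ -x := by linarith
    have hyn : (0:ℝ) ≤ (-x) ^ n := pow_nonneg hy0 n
    have hxn : x ^ n = -((-x) ^ n) := by
      rw [hodd.neg_pow]; ring
    have hxn1 : x ^ (n+1) = (-x) ^ (n+1) := (heven.neg_pow x).symm
    have hh1 : (-((-x) ^ n)) * S x ≤ (-((-x) ^ n)) * (-M - xstar * ε - ε * x) :=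
      mul_le_mul_of_nonpos_left hSb (by linarith)
    have hh2 := key (-x) hy
    have hh4 : (-x) ^ (n+1) = (-x) ^ n * (-x) := pow_succ (-x) n
    rw [hxn, hxn1]
    rw [hh4] at hh2 ⊢
    have e1 : -((-x) ^ n) * (-M - xstar * ε - ε * x) =
        (-x) ^ n * (M + xstar * ε) - (-x) ^ n * (-x) * ε := by ring
    have pos : (0:ℝ) ≤ (-x) ^ n * (-x) * ε := mul_nonneg (mul_nonneg hyn hy0) hε.le
    linarith
  · -- |x| ≤ xstar
    have habs : |x| ≤ xstar := abs_le.mpr ⟨by linarith, by linarith⟩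
    have hSx : |S x| ≤ M := by
      have h := hSM x habs
      have := abs_nonneg (deriv S x)
      linarith
    have hb1 : x ^ n * S x ≤ xstar ^ n * M := by
      calc x ^ n * S x ≤ |x ^ n * S x| := le_abs_self _
        _ = |x| ^ n * |S x| := by rw [abs_mul, abs_pow]
        _ ≤ xstar ^ n * M :=
            mul_le_mul (pow_le_pow_left₀ (abs_nonneg x) habs n) hSx (abs_nonneg _)
              (pow_nonneg (by linarith) n)
    have hb2 : x ^ (n+1) ≤ xstar ^ (n+1) := by
      calc x ^ (n+1) = |x| ^ (n+1) := (heven.pow_abs x).symm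
        _ ≤ xstar ^ (n+1) := pow_le_pow_left₀ (abs_nonneg x) habs _
    have hb3 : (0:ℝ) ≤ x ^ (n+1) := heven.pow_nonneg x
    have hs0 : (0:ℝ) ≤ xstar := by linarith
    have hc1 : xstar ^ n ≤ C ^ n := pow_le_pow_left₀ hs0 hxC n
    have hc2 : xstar ^ (n+1) = xstar ^ n * xstar := pow_succ xstar n
    have t1 : xstar ^ n * M ≤ C ^ n * M := mul_le_mul_of_nonneg_right hc1 hM.le
    have t2 : xstar ^ n * xstar * ε ≤ C ^ n * xstar * ε := by
      apply mul_le_mul_of_nonneg_right _ hε.le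
      exact mul_le_mul_of_nonneg_right hc1 hs0
    have hgap : M + xstar * ε / 2 ≤ D := by
      nlinarith [mul_nonneg hs0 hL0.le, mul_nonneg (mul_nonneg hL0.le hL0.le) hM.le,
        mul_nonneg hs0 hε.le]
    have t4 : C ^ n * (M + xstar * ε / 2) ≤ C ^ n * D := mul_le_mul_of_nonneg_left hgap hCn
    have hb2' : x ^ (n+1) * ε ≤ xstar ^ n * xstar * ε := by
      rw [← hc2]; exact mul_le_mul_of_nonneg_right hb2 hε.le
    nlinarith [t1, t2, t4, hb1, hb2']
end

section
/- Let L > 1, σ_max > 0, y₀ ∈ ℝ and let (A_m)_{m ≥ 1} be nonnegative real numbers. Suppose that for each integer m ≥ 0 there is a C¹ function z_m : [0, ∞) → [0, ∞) with z_0(t) = 1 for all t, z_m(0) = y₀^{2m}, and such that for every m ≥ 1 and every t ≥ 0, z_m'(t) ≤ 2 m A_m − (m/L) z_m(t) + m (2m−1) σ_max² z_{m−1}(t). Then for every m ≥ 1, sup_{t ≥ 0} z_m(t) ≤ (2m−1)!! · Σ_{j=0}^{m} (σ_max² L)^{m−j} B_j, where B_0 = 1 and B_j = y₀^{2j} + 2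 A_j L for j ≥ 1. -/
set_option maxHeartbeats 1000000

lemma comp_bound (a b : ℝ) (hb : 0 < b) (f : ℝ → ℝ) (hf : ContDiff ℝ 1 f)
    (hd : ∀ t, 0 ≤ t → deriv f t ≤ a - b * f t) :
    ∀ t, 0 ≤ t → f t ≤ max (f 0) (a / b) := by
  set c := a / b with hc
  set g : ℝ → ℝ := fun t => (f t - c) * Real.exp (b * t) with hg
  have hf' : ∀ t, HasDerivAt f (deriv f t) t := fun t =>
    ((hf.differentiable one_ne_zero) t).hasDerivAt
  have hgd : ∀ t, HasDerivAt g
      (deriv f t * Real.exp (b * t) + (f t - c) * (Real.exp (b * t) * b)) t := by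
    intro t
    have he : HasDerivAt (fun t => Real.exp (b * t)) (Real.exp (b * t) * b) t := by
      simpa using (((hasDerivAt_id t).const_mul b).exp)
    exact ((hf' t).sub_const c).mul he
  have hanti : AntitoneOn g (Set.Ici 0) := by
    apply antitoneOn_of_deriv_nonpos (convex_Ici 0)
    · exact fun t _ => ((hgd t).continuousAt).continuousWithinAt
    · exact fun t _ => ((hgd t).differentiableAt).differentiableWithinAt
    · intro t ht
      rw [interior_Ici] at ht
      rw [(hgd t).deriv]
      have h1 := hd t ht.le
      have h2 : deriv f t + b * (f t - c) ≤ 0 := by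
        have : b * c = a := by rw [hc]; field_simp
        nlinarith
      have h3 : (0:ℝ) < Real.exp (b * t) := Real.exp_pos _
      nlinarith
  intro t ht
  have key := hanti (Set.self_mem_Ici) ht ht
  simp only [hg, mul_zero, Real.exp_zero, mul_one] at key
  have hexp1 : (1:ℝ) ≤ Real.exp (b * t) := by
    rw [← Real.exp_zero]; exact Real.exp_le_exp.mpr (by positivity)
  rcases le_total (f t) c with h | h
  · exact le_trans h (le_max_right _ _)
  · have hmul : (f t - c) * 1 ≤ (f t - c) * Real.exp (b * t) :=
      mul_le_mul_of_nonneg_left hexp1 (by linarith)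
    have hft : f t ≤ f 0 := by nlinarith
    exact le_trans hft (le_max_left _ _)

lemma dfact_step (m : ℕ) :
    ((Nat.doubleFactorial (2 * (m + 1) - 1) : ℝ)) =
      (2 * (m : ℝ) + 1) * (Nat.doubleFactorial (2 * m - 1) : ℝ) := by
  cases m with
  | zero => simp [Nat.doubleFactorial]
  | succ k =>
      have h1 : 2 * (k + 1 + 1) - 1 = (2 * k + 1) + 2 := by omega
      have h2 : 2 * (k + 1) - 1 = 2 * k + 1 := by omega
      rw [h1, h2, Nat.doubleFactorial]
      push_cast
      ring

/-- Deterministic recursion underlying the uniform moment bound: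
if `z_0 ≡ 1`, `z_m(0) = y₀^{2m}` and
`z_m'(t) ≤ 2 m A_m − (m/L) z_m(t) + m(2m−1) σmax² z_{m−1}(t)` for `t ≥ 0`,
then `sup_{t ≥ 0} z_m(t) ≤ (2m−1)!! ∑_{j=0}^m (σmax² L)^{m−j} B_j`
with `B_0 = 1`, `B_j = y₀^{2j} + 2 A_j L`. -/
theorem moment_recursion_bound
    (L σmax y₀ : ℝ) (hL : 1 < L) (hσ : 0 < σmax)
    (A : ℕ → ℝ) (hA : ∀ m, 0 ≤ A m)
    (z : ℕ → ℝ → ℝ)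
    (hzC1 : ∀ m, ContDiff ℝ 1 (z m))
    (hznn : ∀ m, ∀ t : ℝ, 0 ≤ t → 0 ≤ z m t)
    (hz0 : ∀ t : ℝ, z 0 t = 1)
    (hzinit : ∀ m : ℕ, z m 0 = y₀ ^ (2 * m))
    (hderiv : ∀ m : ℕ, 1 ≤ m → ∀ t : ℝ, 0 ≤ t →
      deriv (z m) t ≤ 2 * (m : ℝ) * A m - ((m : ℝ) / L) * z m t
        + (m : ℝ) * (2 * (m : ℝ) - 1) * σmax ^ 2 * z (m - 1) t) :
    ∀ m : ℕ, 1 ≤ m → ∀ t : ℝ, 0 ≤ t →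
      z m t ≤ (Nat.doubleFactorial (2 * m - 1) : ℝ) *
        ∑ j ∈ Finset.range (m + 1),
          (σmax ^ 2 * L) ^ (m - j) *
            (if j = 0 then 1 else y₀ ^ (2 * j) + 2 * A j * L) := by
  have hL0 : (0:ℝ) < L := by linarith
  set B : ℕ → ℝ := fun j => if j = 0 then 1 else y₀ ^ (2 * j) + 2 * A j * L with hB
  have hBnn : ∀ j, 0 ≤ B j := by
    intro j
    by_cases hj : j = 0
    · simp [hB, hj]
    · simp only [hB, hj, if_false]
      have h1 : 0 ≤ y₀ ^ (2 * j) := by rw [pow_mul]; positivity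
      have h2 : 0 ≤ 2 * A j * L :=
        mul_nonneg (mul_nonneg (by norm_num) (hA j)) (by linarith)
      linarith
  have key : ∀ m : ℕ, ∀ t : ℝ, 0 ≤ t →
      z m t ≤ (Nat.doubleFactorial (2 * m - 1) : ℝ) *
        ∑ j ∈ Finset.range (m + 1), (σmax ^ 2 * L) ^ (m - j) * B j := by
    intro m
    induction m with
    | zero => intro t ht; simp [hz0, hB]
    | succ m IH =>
        set d : ℝ := (Nat.doubleFactorial (2 * m - 1) : ℝ) with hd
        set S : ℝ := ∑ j ∈ Finset.range (m + 1), (σmax ^ 2 * L) ^ (m - j) * B j with hS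
        clear_value d
        have hd1 : (1:ℝ) ≤ d := by
          rw [hd]; exact Nat.one_le_cast.mpr (Nat.doubleFactorial_pos _)
        have hM0 : 0 ≤ d * S := le_trans (hznn m 0 le_rfl) (IH 0 le_rfl)
        set a : ℝ := 2 * ((m:ℝ)+1) * A (m+1) + ((m:ℝ)+1) * (2*((m:ℝ)+1)-1) * σmax^2 * (d * S)
          with ha
        set b : ℝ := ((m:ℝ)+1) / L with hb
        have hbpos : 0 < b := by positivity
        have hm0 : (0:ℝ) ≤ (m:ℝ) := Nat.cast_nonneg m
        have hcoef : (0:ℝ) ≤ ((m:ℝ)+1) * (2*((m:ℝ)+1)-1) * σmax^2 :=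
          mul_nonneg (mul_nonneg (by linarith) (by linarith)) (sq_nonneg σmax)
        have hdzb : ∀ t : ℝ, 0 ≤ t → deriv (z (m+1)) t ≤ a - b * z (m+1) t := by
          intro t ht
          have h := hderiv (m+1) (Nat.succ_le_succ (Nat.zero_le m)) t ht
          have hzm := IH t ht
          push_cast [Nat.succ_sub_one] at h
          have := mul_le_mul_of_nonneg_left hzm hcoef
          rw [ha, hb]; ring_nf; ring_nf at h this ⊢; linarith
        have hmax := comp_bound a b hbpos (z (m+1)) (hzC1 (m+1)) hdzb
        intro t ht
        have hzt := hmax t ht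
        -- compute a / b
        have hab : a / b = 2 * A (m+1) * L + (2*((m:ℝ)+1)-1) * σmax^2 * L * (d * S) := by
          rw [ha, hb]
          have hm1 : ((m:ℝ)+1) ≠ 0 := by positivity
          field_simp
        -- rewrite target
        have hsum : ∑ j ∈ Finset.range (m + 2), (σmax ^ 2 * L) ^ (m + 1 - j) * B j
            = σmax^2 * L * S + B (m+1) := by
          rw [Finset.sum_range_succ, hS, Finset.mul_sum]
          have : ∀ j ∈ Finset.range (m+1),
              (σmax ^ 2 * L) ^ (m + 1 - j) * B j
                = σmax^2 * L * ((σmax ^ 2 * L) ^ (m - j) * B j) := by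
            intro j hj
            have hjm : j ≤ m := Nat.lt_succ_iff.mp (Finset.mem_range.mp hj)
            rw [show m + 1 - j = (m - j) + 1 by omega, pow_succ]
            ring
          rw [Finset.sum_congr rfl this]
          simp
        have hdf : (Nat.doubleFactorial (2 * (m+1) - 1) : ℝ) = (2*(m:ℝ)+1) * d := by
          rw [hd]; exact dfact_step m
        calc z (m+1) t ≤ max (z (m+1) 0) (a / b) := hzt
          _ ≤ (Nat.doubleFactorial (2 * (m+1) - 1) : ℝ) *
              ∑ j ∈ Finset.range (m + 2), (σmax ^ 2 * L) ^ (m + 1 - j) * B j := by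
            rw [hsum, hdf, hzinit (m+1), hab]
            have hBsucc : B (m+1) = y₀ ^ (2*(m+1)) + 2 * A (m+1) * L := by
              simp [hB]
            have hAL0 : 0 ≤ 2 * A (m+1) * L :=
              mul_nonneg (mul_nonneg (by norm_num) (hA (m+1))) (by linarith)
            have hy0 : 0 ≤ y₀ ^ (2 * (m+1)) := by rw [pow_mul]; positivity
            have hy : y₀ ^ (2 * (m+1)) ≤ B (m+1) := by rw [hBsucc]; linarith
            have hAL : 2 * A (m+1) * L ≤ B (m+1) := by rw [hBsucc]; linarith
            have hS0 : 0 ≤ S :=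
              Finset.sum_nonneg fun j _ => mul_nonneg (by positivity) (hBnn j)
            have hB1 := hBnn (m+1)
            have hq : (1:ℝ) ≤ (2*(m:ℝ)+1) * d := by nlinarith
            have h1 : B (m+1) ≤ (2*(m:ℝ)+1) * d * B (m+1) := by nlinarith
            have h2 : 0 ≤ (2*(m:ℝ)+1) * d * (σmax^2 * L * S) :=
              mul_nonneg (mul_nonneg (by linarith) (by linarith))
                (mul_nonneg (by positivity) hS0)
            apply max_le
            · nlinarith [h1, h2, hy]
            · nlinarith [h1, h2, hAL]
  intro m hm t ht
  have := key m t ht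
  simpa [hB] using this
end
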